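/- Assume: with probability 1, the functions h ↦ S_1(h) and h ↦ T_1(h) are continuous on H and S_1(h) ≥ 0 for all h; sup_{h∈H} |S_1(h)| and sup_{h∈H} |T_1(h)| are measurable with finite expectation; and E(S_1(h)) > 0 for every h ∈ H. Then, almost surely, sup_{h∈H} | (∑_{r=1}^R T_r(h)) / (∑_{r=1}^R S_r(h)) − E(T_1(h))/E(S_1(h)) | → 0 as R → ∞. -/

import Mathlib

open MeasureTheory ProbabilityTheory Filter Topology

section AuxStmt16

variable {K : Type*} [MetricSpace K] [CompactSpace K] [Nonempty K]
  {Ω : Type*} [MeasurableSpace Ω]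

private lemma stmt16_aux_dist_meas (u : Ω → C(K, ℝ)) (hu : ∀ x : K, Measurable fun ω => u ω x)
    (c : C(K, ℝ)) : Measurable fun ω => dist (u ω) c := by
  set d : ℕ → K := TopologicalSpace.denseSeq K with hd
  have hdr : DenseRange d := TopologicalSpace.denseRange_denseSeq K
  apply measurable_of_Iic
  intro r
  by_cases hr : 0 ≤ r
  · have hEq : (fun ω => dist (u ω) c) ⁻¹' Set.Iic r
        = ⋂ n : ℕ, {ω | dist (u ω (d n)) (c (d n)) ≤ r} := by
      ext ω
      simp only [Set.mem_preimage, Set.mem_Iic, Set.mem_iInter, Set.mem_setOf_eq]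
      constructor
      · intro h n
        exact (ContinuousMap.dist_apply_le_dist (d n)).trans h
      · intro h
        rw [ContinuousMap.dist_le hr]
        intro x
        have hclosed : IsClosed {x : K | dist (u ω x) (c x) ≤ r} :=
          isClosed_le (((u ω).continuous.dist c.continuous)) continuous_const
        have hsub : Set.range d ⊆ {x : K | dist (u ω x) (c x) ≤ r} := by
          rintro _ ⟨n, rfl⟩; exact h n
        have := hclosed.closure_subset_iff.2 hsub
        have hx : x ∈ closure (Set.range d) := by
          rw [hdr.closure_range]; trivial
        exact this hx
    rw [hEq]
    exact MeasurableSet.iInter fun n =>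
      measurableSet_le (Measurable.dist (hu (d n)) measurable_const) measurable_const
  · have hEq : (fun ω => dist (u ω) c) ⁻¹' Set.Iic r = ∅ := by
      ext ω
      simp only [Set.mem_preimage, Set.mem_Iic, Set.mem_empty_iff_false, iff_false, not_le]
      exact lt_of_lt_of_le (lt_of_not_ge hr) dist_nonneg
    rw [hEq]; exact MeasurableSet.empty

private lemma stmt16_aux_meas [MeasurableSpace C(K, ℝ)] [BorelSpace C(K, ℝ)]
    (u : Ω → C(K, ℝ)) (hu : ∀ x : K, Measurable fun ω => u ω x) : Measurable u := by
  set c : ℕ → C(K, ℝ) := TopologicalSpace.denseSeq C(K, ℝ) with hc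
  have hcr : DenseRange c := TopologicalSpace.denseRange_denseSeq C(K, ℝ)
  apply measurable_of_isOpen
  intro U hU
  have key : U = ⋃ (n : ℕ) (q : ℚ) (_ : 0 < (q : ℝ) ∧ Metric.ball (c n) (q : ℝ) ⊆ U),
      Metric.ball (c n) (q : ℝ) := by
    apply Set.Subset.antisymm
    · intro f hf
      obtain ⟨ε, hε, hball⟩ := Metric.isOpen_iff.1 hU f hf
      obtain ⟨n, hg⟩ := hcr.exists_dist_lt f (by positivity : (0:ℝ) < ε / 3)
      obtain ⟨q, hq1, hq2⟩ := exists_rat_btwn (by linarith : dist f (c n) < ε / 2)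
      have hq0 : 0 < (q : ℝ) := lt_of_le_of_lt dist_nonneg hq1
      have hsub : Metric.ball (c n) (q : ℝ) ⊆ U := by
        refine Set.Subset.trans ?_ hball
        intro y hy
        rw [Metric.mem_ball] at hy ⊢
        have h1 : dist (c n) f < ε / 2 := by
          rw [dist_comm]; linarith
        calc dist y f ≤ dist y (c n) + dist (c n) f := dist_triangle _ _ _
          _ < q + ε / 2 := by exact add_lt_add hy h1
          _ < ε / 2 + ε / 2 := by linarith
          _ = ε := by ring
      refine Set.mem_iUnion.2 ⟨n, Set.mem_iUnion.2 ⟨q, Set.mem_iUnion.2 ⟨⟨hq0, hsub⟩, ?_⟩⟩⟩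
      rw [Metric.mem_ball]
      exact hq1
    · intro f hf
      simp only [Set.mem_iUnion] at hf
      obtain ⟨n, q, ⟨_, hsub⟩, hmem⟩ := hf
      exact hsub hmem
  rw [key]
  simp only [Set.preimage_iUnion]
  refine MeasurableSet.iUnion fun n => MeasurableSet.iUnion fun q =>
    MeasurableSet.iUnion fun _ => ?_
  have : u ⁻¹' Metric.ball (c n) (q : ℝ) = {ω | dist (u ω) (c n) < (q : ℝ)} := by
    ext ω; simp [Metric.mem_ball]
  rw [this]
  exact measurableSet_lt (stmt16_aux_dist_meas u hu (c n)) measurable_const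

private lemma stmt16_aux_psi [MeasurableSpace C(K, ℝ)] [BorelSpace C(K, ℝ)] :
    ∃ ψ : (K → ℝ) → C(K, ℝ), Measurable ψ ∧ ∀ (s : K → ℝ) (hs : Continuous s), ψ s = ⟨s, hs⟩ := by
  classical
  set d : ℕ → K := TopologicalSpace.denseSeq K with hd
  have hdr : DenseRange d := TopologicalSpace.denseRange_denseSeq K
  set M : Set (K → ℝ) := {s | ∀ ε : ℚ, 0 < ε → ∃ δ : ℚ, 0 < δ ∧
    ∀ m n : ℕ, dist (d m) (d n) < (δ : ℝ) → |s (d m) - s (d n)| ≤ (ε : ℝ)} with hMdef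
  have hM : MeasurableSet M := by
    have : M = ⋂ (ε : ℚ) (_ : 0 < ε), ⋃ (δ : ℚ) (_ : 0 < δ),
        ⋂ (m : ℕ) (n : ℕ) (_ : dist (d m) (d n) < (δ : ℝ)),
          {s : K → ℝ | |s (d m) - s (d n)| ≤ (ε : ℝ)} := by
      ext s
      simp only [hMdef, Set.mem_setOf_eq, Set.mem_iInter, Set.mem_iUnion, Set.mem_setOf_eq]
      exact ⟨fun h ε hε => (h ε hε).imp fun δ hδ => ⟨hδ.1, fun m n hmn => hδ.2 m n hmn⟩,
        fun h ε hε => (h ε hε).imp fun δ hδ => ⟨hδ.1, fun m n hmn => hδ.2 m n hmn⟩⟩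
    rw [this]
    refine MeasurableSet.iInter fun ε => MeasurableSet.iInter fun _ => ?_
    refine MeasurableSet.iUnion fun δ => MeasurableSet.iUnion fun _ => ?_
    refine MeasurableSet.iInter fun m => MeasurableSet.iInter fun n =>
      MeasurableSet.iInter fun _ => ?_
    exact measurableSet_le
      (((measurable_pi_apply (d m)).sub (measurable_pi_apply (d n))).abs) measurable_const
  have hext : ∀ s ∈ M, ∃ f : C(K, ℝ), ∀ n, f (d n) = s (d n) := by
    intro s hs
    set A : Set K := Set.range d with hA
    have hAd : Dense A := hdr
    have hUC : UniformContinuous (fun a : A => s (a : K)) := by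
      rw [Metric.uniformContinuous_iff]
      intro ε hε
      obtain ⟨ε', hε'1, hε'2⟩ := exists_rat_btwn (half_pos hε)
      have hε'0 : (0 : ℚ) < ε' := by exact_mod_cast hε'1
      obtain ⟨δ, hδ0, hδ⟩ := hs ε' hε'0
      refine ⟨(δ : ℝ), by exact_mod_cast hδ0, fun {a b} hab => ?_⟩
      obtain ⟨m, hm⟩ := a.2
      obtain ⟨n, hn⟩ := b.2
      have h1 : dist (d m) (d n) < (δ : ℝ) := by
        rwa [hm, hn, ← Subtype.dist_eq]
      have h2 := hδ m n h1
      rw [hm, hn] at h2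
      rw [Real.dist_eq]
      calc |s (a : K) - s (b : K)| ≤ (ε' : ℝ) := h2
        _ < ε / 2 := hε'2
        _ < ε := by linarith
    have h_e : IsUniformInducing (Subtype.val : A → K) :=
      isUniformEmbedding_subtype_val.isUniformInducing
    have h_dense : DenseRange (Subtype.val : A → K) := hAd.denseRange_val
    set F := (h_e.isDenseInducing h_dense).extend (fun a : A => s (a : K)) with hF
    have hFc : Continuous F :=
      (uniformContinuous_uniformly_extend h_e h_dense hUC).continuous
    refine ⟨⟨F, hFc⟩, fun n => ?_⟩
    have : F ((⟨d n, ⟨n, rfl⟩⟩ : A) : K) = s ((⟨d n, ⟨n, rfl⟩⟩ : A) : K) :=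
      uniformly_extend_of_ind h_e h_dense hUC ⟨d n, ⟨n, rfl⟩⟩
    simpa using this
  set ψ : (K → ℝ) → C(K, ℝ) := fun s => if h : s ∈ M then (hext s h).choose else 0 with hψ
  have hψd : ∀ (s) (h : s ∈ M) (n : ℕ), ψ s (d n) = s (d n) := by
    intro s h n
    simp only [hψ, dif_pos h]
    exact (hext s h).choose_spec n
  have hcm : ∀ s : K → ℝ, Continuous s → s ∈ M := by
    intro s hs ε hε
    have hUC := CompactSpace.uniformContinuous_of_continuous hs
    rw [Metric.uniformContinuous_iff] at hUC
    obtain ⟨δ, hδ0, hδ⟩ := hUC (ε : ℝ) (by exact_mod_cast hε)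
    obtain ⟨δ', h1, h2⟩ := exists_rat_btwn hδ0
    have hδ'0 : (0 : ℚ) < δ' := by exact_mod_cast h1
    refine ⟨δ', hδ'0, fun m n hmn => ?_⟩
    have := hδ (lt_trans hmn h2)
    rw [Real.dist_eq] at this
    exact this.le
  refine ⟨ψ, ?_, ?_⟩
  · apply stmt16_aux_meas
    intro x
    have hdn : ∀ n, Measurable fun s : K → ℝ => ψ s (d n) := by
      intro n
      have heq : (fun s : K → ℝ => ψ s (d n)) = fun s => if s ∈ M then s (d n) else 0 := by
        funext s
        by_cases h : s ∈ M
        · rw [if_pos h]; exact hψd s h n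
        · simp only [hψ, dif_neg h, if_neg h]; rfl
      rw [heq]
      exact Measurable.ite hM (measurable_pi_apply _) measurable_const
    have hseq : ∀ j : ℕ, ∃ n, dist x (d n) < 1 / (j + 1 : ℝ) := by
      intro j
      exact hdr.exists_dist_lt x (by positivity)
    choose φ hφ using hseq
    have hx : Tendsto (fun j => d (φ j)) atTop (𝓝 x) := by
      rw [tendsto_iff_dist_tendsto_zero]
      apply squeeze_zero (fun j => dist_nonneg) (fun j => (dist_comm (d (φ j)) x ▸ (hφ j).le))
      exact tendsto_one_div_add_atTop_nhds_zero_nat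
    apply measurable_of_tendsto_metrizable (fun j => hdn (φ j))
    rw [tendsto_pi_nhds]
    intro s
    exact ((ψ s).continuous.tendsto x).comp hx
  · intro s hs
    have h := hcm s hs
    have heq : (ψ s : K → ℝ) = s := by
      refine Continuous.ext_on (hdr : Dense (Set.range d)) (ψ s).continuous hs ?_
      rintro _ ⟨n, rfl⟩
      exact hψd s h n
    exact ContinuousMap.ext fun x => congrFun heq x

private lemma stmt16_ratio_bound {A B a b m nA nB cb : ℝ} (hm : 0 < m) (ha : m ≤ a)
    (hA : m / 2 ≤ A) (h1 : |B - b| ≤ nB) (h2 : |a - A| ≤ nA) (h3 : |b| ≤ cb) :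
    |B / A - b / a| ≤ 2 / m * nB + 2 / m ^ 2 * cb * nA := by
  have hA0 : 0 < A := lt_of_lt_of_le (by linarith) hA
  have ha0 : 0 < a := lt_of_lt_of_le hm ha
  have hnB : 0 ≤ nB := le_trans (abs_nonneg _) h1
  have hnA : 0 ≤ nA := le_trans (abs_nonneg _) h2
  have hcb : 0 ≤ cb := le_trans (abs_nonneg _) h3
  have key : B / A - b / a = (B - b) / A + b * (a - A) / (A * a) := by
    field_simp
    ring
  rw [key]
  have t1 : |(B - b) / A| ≤ 2 / m * nB := by
    rw [abs_div, abs_of_pos hA0]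
    have : |B - b| / A ≤ nB / (m / 2) :=
      div_le_div₀ hnB h1 (by linarith) hA
    calc |B - b| / A ≤ nB / (m / 2) := this
      _ = 2 / m * nB := by field_simp
  have t2 : |b * (a - A) / (A * a)| ≤ 2 / m ^ 2 * cb * nA := by
    rw [abs_div, abs_mul, abs_of_pos (mul_pos hA0 ha0)]
    have hnum : |b| * |a - A| ≤ cb * nA := mul_le_mul h3 h2 (abs_nonneg _) hcb
    have hden : m / 2 * m ≤ A * a := mul_le_mul hA ha hm.le hA0.le
    have : |b| * |a - A| / (A * a) ≤ cb * nA / (m / 2 * m) :=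
      div_le_div₀ (mul_nonneg hcb hnA) hnum (by positivity) hden
    calc |b| * |a - A| / (A * a) ≤ cb * nA / (m / 2 * m) := this
      _ = 2 / m ^ 2 * cb * nA := by field_simp
  calc |(B - b) / A + b * (a - A) / (A * a)|
      ≤ |(B - b) / A| + |b * (a - A) / (A * a)| := abs_add_le _ _
    _ ≤ 2 / m * nB + 2 / m ^ 2 * cb * nA := add_le_add t1 t2

end AuxStmt16

/-- uniform consistency of the regenerative ratio estimator.  For iid tour
triples `(N_r, S_r, T_r)` with `S₁, T₁` a.s. continuous on the compact set `H`, `S₁ ≥ 0`,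
`sup_h |S₁(h)|` and `sup_h |T₁(h)|` integrable, and `E S₁(h) > 0` for all `h`:  almost surely
`sup_{h ∈ H} |∑_{r≤R} T_r(h) / ∑_{r≤R} S_r(h) − E T₁(h) / E S₁(h)| → 0`. -/
theorem stmt16 {k : ℕ} (H : Set (EuclideanSpace ℝ (Fin k))) (hH : IsCompact H)
    {Ω : Type*} [MeasurableSpace Ω] (μ : Measure Ω) [IsProbabilityMeasure μ]
    (N : ℕ → Ω → ℕ) (S T : ℕ → Ω → H → ℝ)
    (hN_pos : ∀ r ω, 1 ≤ N r ω)
    (hiid_indep : iIndepFun (fun r ω => (N r ω, S r ω, T r ω)) μ)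
    (hiid_ident : ∀ r, IdentDistrib (fun ω => (N r ω, S r ω, T r ω))
      (fun ω => (N 0 ω, S 0 ω, T 0 ω)) μ μ)
    (hN_int : Integrable (fun ω => (N 0 ω : ℝ)) μ)
    (hST_cont : ∀ r, ∀ᵐ ω ∂μ, Continuous (S r ω) ∧ Continuous (T r ω) ∧ ∀ h, 0 ≤ S r ω h)
    (hsupS_meas : ∀ r, Measurable (fun ω => ⨆ h : H, |S r ω h|))
    (hsupS_int : ∀ r, Integrable (fun ω => ⨆ h : H, |S r ω h|) μ)
    (hsupT_meas : ∀ r, Measurable (fun ω => ⨆ h : H, |T r ω h|))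
    (hsupT_int : ∀ r, Integrable (fun ω => ⨆ h : H, |T r ω h|) μ)
    (hS_pos : ∀ h : H, 0 < ∫ ω, S 0 ω h ∂μ) :
    ∀ᵐ ω ∂μ, Tendsto (fun R : ℕ =>
        ⨆ h : H, |(∑ r ∈ Finset.range R, T r ω h) / (∑ r ∈ Finset.range R, S r ω h)
          - (∫ ω', T 0 ω' h ∂μ) / (∫ ω', S 0 ω' h ∂μ)|)
      atTop (𝓝 0) := by
  classical
  rcases isEmpty_or_nonempty (↥H) with hKe | hKn
  · refine Eventually.of_forall fun ω => ?_
    have : ∀ R : ℕ, (⨆ h : H, |(∑ r ∈ Finset.range R, T r ω h) / (∑ r ∈ Finset.range R, S r ω h)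
          - (∫ ω', T 0 ω' h ∂μ) / (∫ ω', S 0 ω' h ∂μ)|) = 0 :=
      fun R => Real.iSup_of_isEmpty _
    simp only [this]
    exact tendsto_const_nhds
  · haveI : CompactSpace (↥H) := isCompact_iff_compactSpace.mp hH
    borelize C(↥H, ℝ)
    obtain ⟨ψ, hψm, hψc⟩ := stmt16_aux_psi (K := ↥H)
    -- the C(H,ℝ)-valued processes
    set Z : ℕ → Ω → ℕ × ((↥H → ℝ) × (↥H → ℝ)) := fun r ω => (N r ω, S r ω, T r ω) with hZ
    set ΦS : (ℕ × ((↥H → ℝ) × (↥H → ℝ))) → C(↥H, ℝ) := fun p => ψ p.2.1 with hΦS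
    set ΦT : (ℕ × ((↥H → ℝ) × (↥H → ℝ))) → C(↥H, ℝ) := fun p => ψ p.2.2 with hΦT
    have hΦSm : Measurable ΦS := hψm.comp (measurable_fst.comp measurable_snd)
    have hΦTm : Measurable ΦT := hψm.comp (measurable_snd.comp measurable_snd)
    set X : ℕ → Ω → C(↥H, ℝ) := fun r => ΦS ∘ Z r with hX
    set Y : ℕ → Ω → C(↥H, ℝ) := fun r => ΦT ∘ Z r with hY
    -- a.e. pointwise identification
    have hE : ∀ r, ∀ᵐ ω ∂μ, (∀ x : ↥H, X r ω x = S r ω x) ∧ (∀ x : ↥H, Y r ω x = T r ω x) := by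
      intro r
      filter_upwards [hST_cont r] with ω hω
      constructor
      · intro x
        have : X r ω = ⟨S r ω, hω.1⟩ := hψc _ hω.1
        rw [this]; rfl
      · intro x
        have : Y r ω = ⟨T r ω, hω.2.1⟩ := hψc _ hω.2.1
        rw [this]; rfl
    -- independence and identical distribution
    have hindepX : Pairwise (Function.onFun (IndepFun · · μ) X) := fun i j hij =>
      (hiid_indep.indepFun hij).comp hΦSm hΦSm
    have hindepY : Pairwise (Function.onFun (IndepFun · · μ) Y) := fun i j hij =>
      (hiid_indep.indepFun hij).comp hΦTm hΦTm
    have hidentX : ∀ i, IdentDistrib (X i) (X 0) μ μ := fun i => (hiid_ident i).comp hΦSm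
    have hidentY : ∀ i, IdentDistrib (Y i) (Y 0) μ μ := fun i => (hiid_ident i).comp hΦTm
    -- integrability
    have hZ0 : AEMeasurable (Z 0) μ := (hiid_ident 0).aemeasurable_fst
    have hX0sm : AEStronglyMeasurable (X 0) μ :=
      (hΦSm.comp_aemeasurable hZ0).aestronglyMeasurable
    have hY0sm : AEStronglyMeasurable (Y 0) μ :=
      (hΦTm.comp_aemeasurable hZ0).aestronglyMeasurable
    have hX0int : Integrable (X 0) μ := by
      apply Integrable.mono' (hsupS_int 0) hX0sm
      filter_upwards [hST_cont 0] with ω hω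
      have : X 0 ω = ⟨S 0 ω, hω.1⟩ := hψc _ hω.1
      rw [this, ContinuousMap.norm_eq_iSup_norm]
      apply le_of_eq
      simp [Real.norm_eq_abs]
    have hY0int : Integrable (Y 0) μ := by
      apply Integrable.mono' (hsupT_int 0) hY0sm
      filter_upwards [hST_cont 0] with ω hω
      have : Y 0 ω = ⟨T 0 ω, hω.2.1⟩ := hψc _ hω.2.1
      rw [this, ContinuousMap.norm_eq_iSup_norm]
      apply le_of_eq
      simp [Real.norm_eq_abs]
    -- strong law of large numbers in C(H,ℝ)
    have CS := ProbabilityTheory.strong_law_ae X hX0int hindepX hidentX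
    have CT := ProbabilityTheory.strong_law_ae Y hY0int hindepY hidentY
    set a : C(↥H, ℝ) := ∫ ω, X 0 ω ∂μ with ha
    set b : C(↥H, ℝ) := ∫ ω, Y 0 ω ∂μ with hb
    -- evaluation of the limits
    have haeval : ∀ x : ↥H, a x = ∫ ω, S 0 ω x ∂μ := by
      intro x
      have h1 : a x = ∫ ω, X 0 ω x ∂μ :=
        ((ContinuousMap.evalCLM ℝ x).integral_comp_comm hX0int).symm
      rw [h1]
      apply integral_congr_ae
      filter_upwards [hE 0] with ω hω using hω.1 x
    have hbeval : ∀ x : ↥H, b x = ∫ ω, T 0 ω x ∂μ := by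
      intro x
      have h1 : b x = ∫ ω, Y 0 ω x ∂μ :=
        ((ContinuousMap.evalCLM ℝ x).integral_comp_comm hY0int).symm
      rw [h1]
      apply integral_congr_ae
      filter_upwards [hE 0] with ω hω using hω.2 x
    -- the minimum of a
    have hapos : ∀ x : ↥H, 0 < a x := fun x => by rw [haeval x]; exact hS_pos x
    obtain ⟨x₀, -, hx₀⟩ := isCompact_univ.exists_isMinOn Set.univ_nonempty
      a.continuous.continuousOn
    set m : ℝ := a x₀ with hmdef
    have hm : 0 < m := hapos x₀
    have hmle : ∀ x : ↥H, m ≤ a x := fun x => hx₀ (Set.mem_univ x)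
    -- the final argument
    have hEall : ∀ᵐ ω ∂μ, ∀ r, (∀ x : ↥H, X r ω x = S r ω x) ∧ (∀ x : ↥H, Y r ω x = T r ω x) :=
      ae_all_iff.2 hE
    filter_upwards [CS, CT, hEall] with ω hCS hCT hEω
    set A : ℕ → C(↥H, ℝ) := fun R => (R : ℝ)⁻¹ • ∑ r ∈ Finset.range R, X r ω with hA
    set B : ℕ → C(↥H, ℝ) := fun R => (R : ℝ)⁻¹ • ∑ r ∈ Finset.range R, Y r ω with hB
    have hAten : Tendsto (fun R => ‖A R - a‖) atTop (𝓝 0) :=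
      tendsto_iff_norm_sub_tendsto_zero.1 hCS
    have hBten : Tendsto (fun R => ‖B R - b‖) atTop (𝓝 0) :=
      tendsto_iff_norm_sub_tendsto_zero.1 hCT
    set g : ℕ → ℝ := fun R => 2 / m * ‖B R - b‖ + 2 / m ^ 2 * ‖b‖ * ‖A R - a‖ with hg
    have hg0 : Tendsto g atTop (𝓝 0) := by
      have := (hBten.const_mul (2 / m)).add (hAten.const_mul (2 / m ^ 2 * ‖b‖))
      simpa using this
    apply squeeze_zero' (Eventually.of_forall fun R =>
      Real.iSup_nonneg fun x => abs_nonneg _) ?_ hg0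
    have h1 : ∀ᶠ R : ℕ in atTop, ‖A R - a‖ < m / 2 :=
      hAten.eventually_lt_const (half_pos hm)
    filter_upwards [h1, eventually_ge_atTop 1] with R hR1 hR2
    apply Real.iSup_le _ (by positivity)
    intro x
    have hRne : ((R : ℝ))⁻¹ ≠ 0 := by
      have : (0 : ℝ) < R := by exact_mod_cast hR2
      positivity
    -- identify the sums with A and B
    have hAx : A R x = (R : ℝ)⁻¹ * ∑ r ∈ Finset.range R, S r ω x := by
      simp only [hA, ContinuousMap.smul_apply, smul_eq_mul]
      congr 1
      calc (∑ r ∈ Finset.range R, X r ω) x = ∑ r ∈ Finset.range R, X r ω x := by simp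
        _ = ∑ r ∈ Finset.range R, S r ω x := Finset.sum_congr rfl fun r _ => (hEω r).1 x
    have hBx : B R x = (R : ℝ)⁻¹ * ∑ r ∈ Finset.range R, T r ω x := by
      simp only [hB, ContinuousMap.smul_apply, smul_eq_mul]
      congr 1
      calc (∑ r ∈ Finset.range R, Y r ω) x = ∑ r ∈ Finset.range R, Y r ω x := by simp
        _ = ∑ r ∈ Finset.range R, T r ω x := Finset.sum_congr rfl fun r _ => (hEω r).2 x
    have habsA : |a x - A R x| ≤ ‖A R - a‖ := by
      have := (A R - a).norm_coe_le_norm x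
      rw [ContinuousMap.sub_apply, Real.norm_eq_abs, abs_sub_comm] at this
      exact this
    have habsB : |B R x - b x| ≤ ‖B R - b‖ := by
      have := (B R - b).norm_coe_le_norm x
      rwa [ContinuousMap.sub_apply, Real.norm_eq_abs] at this
    have hbx : |b x| ≤ ‖b‖ := by
      have := b.norm_coe_le_norm x
      rwa [Real.norm_eq_abs] at this
    have hAxm : m / 2 ≤ A R x := by
      have h1 := (abs_le.1 habsA).2
      have h2 := hmle x
      linarith
    have hratio : (∑ r ∈ Finset.range R, T r ω x) / (∑ r ∈ Finset.range R, S r ω x)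
        = B R x / A R x := by
      rw [hAx, hBx]
      exact (mul_div_mul_left _ _ hRne).symm
    have key : |(∑ r ∈ Finset.range R, T r ω x) / (∑ r ∈ Finset.range R, S r ω x)
        - (∫ ω', T 0 ω' x ∂μ) / (∫ ω', S 0 ω' x ∂μ)| ≤ g R := by
      rw [hratio, ← hbeval x, ← haeval x]
      exact stmt16_ratio_bound hm (hmle x) hAxm habsB habsA hbx
    exact key
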